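/- arXiv:2509.12640 — 2 statements merged into one kernel-verified Lean document; each statement's English description precedes it below -/
import Mathlib

section
/- For every integer k ≥ 0, the tricyclic graph T_3^k (three triangles sharing a common vertex v, with k pendant edges at v) satisfies λ_2(T_3^k) < -1/2, and more precisely -3/4 < λ_2(T_3^k) < -1/2 for k ≥ 1. -/
open Polynomial

/-- Distance matrix of a graph. -/
noncomputable def distMatrix {V : Type*} [Fintype V] (G : SimpleGraph V) :
    Matrix V V ℝ := fun i j => (G.dist i j : ℝ)

/-- The tricyclic graph `T₃ᵏ` on `k + 7` vertices: three triangles `0,1,2`, `0,3,4`,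
`0,5,6` sharing the common vertex `0`, together with `k` pendant edges at `0`. -/
def T3 (k : ℕ) : SimpleGraph (Fin (k + 7)) :=
  SimpleGraph.fromRel (fun a b =>
    (a = 0 ∧ b ≠ 0) ∨ (a.val, b.val) ∈ [(1, 2), (3, 4), (5, 6)])

namespace T3aux

/-- pairing relation on vertex values -/
def pr (a b : ℕ) : Prop := (a = 1 ∧ b = 2) ∨ (a = 2 ∧ b = 1) ∨ (a = 3 ∧ b = 4) ∨
  (a = 4 ∧ b = 3) ∨ (a = 5 ∧ b = 6) ∨ (a = 6 ∧ b = 5)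

instance (a b : ℕ) : Decidable (pr a b) := by unfold pr; infer_instance

lemma pr_symm {a b : ℕ} (h : pr a b) : pr b a := by unfold pr at *; omega

/-- partner value -/
def pv (a : ℕ) : ℕ := if a = 1 then 2 else if a = 2 then 1 else if a = 3 then 4
  else if a = 4 then 3 else if a = 5 then 6 else if a = 6 then 5 else a

lemma pr_iff {a b : ℕ} : pr a b ↔ (1 ≤ a ∧ a ≤ 6 ∧ b = pv a) := by
  unfold pr pv; split_ifs <;> omega

lemma pv_fix {a : ℕ} (h : ¬(1 ≤ a ∧ a ≤ 6)) : pv a = a := by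
  unfold pv; split_ifs <;> omega

lemma pv_pv {a : ℕ} : pv (pv a) = a := by
  by_cases h : 1 ≤ a ∧ a ≤ 6
  · obtain ⟨h1, h2⟩ := h; interval_cases a <;> rfl
  · rw [pv_fix h, pv_fix h]

lemma pv_mem {a : ℕ} (h1 : 1 ≤ a) (h2 : a ≤ 6) : 1 ≤ pv a ∧ pv a ≤ 6 ∧ pv a ≠ a := by
  unfold pv; split_ifs <;> omega

variable {k : ℕ}

lemma adj_iff {a b : Fin (k + 7)} :
    (T3 k).Adj a b ↔ a ≠ b ∧ (a = 0 ∨ b = 0 ∨ pr a.val b.val) := by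
  rw [T3, SimpleGraph.fromRel_adj]
  constructor
  · rintro ⟨hne, h | h⟩
    · refine ⟨hne, ?_⟩
      rcases h with ⟨h1, -⟩ | h1
      · exact Or.inl h1
      · simp only [List.mem_cons, List.mem_singleton, Prod.mk.injEq, List.not_mem_nil,
          or_false] at h1
        exact Or.inr (Or.inr (by unfold pr; omega))
    · refine ⟨hne, ?_⟩
      rcases h with ⟨h1, -⟩ | h1
      · exact Or.inr (Or.inl h1)
      · simp only [List.mem_cons, List.mem_singleton, Prod.mk.injEq, List.not_mem_nil,
          or_false] at h1
        exact Or.inr (Or.inr (by unfold pr; omega))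
  · rintro ⟨hne, h0 | h0 | hp⟩
    · exact ⟨hne, Or.inl (Or.inl ⟨h0, fun hb => hne (hb ▸ h0)⟩)⟩
    · exact ⟨hne, Or.inr (Or.inl ⟨h0, fun hb => hne.symm (hb ▸ h0)⟩)⟩
    · unfold pr at hp
      rcases hp with h | h | h | h | h | h
      · exact ⟨hne, Or.inl (Or.inr (by simp [h.1, h.2]))⟩
      · exact ⟨hne, Or.inr (Or.inr (by simp [h.1, h.2]))⟩
      · exact ⟨hne, Or.inl (Or.inr (by simp [h.1, h.2]))⟩
      · exact ⟨hne, Or.inr (Or.inr (by simp [h.1, h.2]))⟩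
      · exact ⟨hne, Or.inl (Or.inr (by simp [h.1, h.2]))⟩
      · exact ⟨hne, Or.inr (Or.inr (by simp [h.1, h.2]))⟩

/-- explicit distance matrix -/
noncomputable def Dex (k : ℕ) : Matrix (Fin (k + 7)) (Fin (k + 7)) ℝ := fun i j =>
  if i = j then 0 else if i = 0 ∨ j = 0 ∨ pr i.val j.val then 1 else 2

lemma adj_zero {a : Fin (k+7)} (h : a ≠ 0) : (T3 k).Adj a 0 :=
  adj_iff.mpr ⟨h, Or.inr (Or.inl rfl)⟩

lemma dist_eq (i j : Fin (k + 7)) : distMatrix (T3 k) i j = Dex k i j := by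
  unfold distMatrix Dex
  by_cases hij : i = j
  · simp [hij, SimpleGraph.dist_self]
  · rw [if_neg hij]
    by_cases hadj : (T3 k).Adj i j
    · rw [if_pos, SimpleGraph.dist_eq_one_iff_adj.mpr hadj]; · norm_num
      exact (adj_iff.mp hadj).2
    · rw [if_neg]
      · -- distance 2
        have hi0 : i ≠ 0 := fun h => hadj (adj_iff.mpr ⟨hij, Or.inl h⟩)
        have hj0 : j ≠ 0 := fun h => hadj (adj_iff.mpr ⟨hij, Or.inr (Or.inl h)⟩)
        have w : (T3 k).Walk i j :=
          SimpleGraph.Walk.cons (adj_zero hi0)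
            (SimpleGraph.Walk.cons ((T3 k).adj_symm (adj_zero hj0)) SimpleGraph.Walk.nil)
        have h2 : (T3 k).dist i j ≤ 2 := by
          simpa using SimpleGraph.dist_le (SimpleGraph.Walk.cons (adj_zero hi0)
            (SimpleGraph.Walk.cons ((T3 k).adj_symm (adj_zero hj0)) SimpleGraph.Walk.nil))
        have h0 : (T3 k).dist i j ≠ 0 := by
          have : ¬((i = j) ∨ ¬(T3 k).Reachable i j) := by
            push_neg
            exact ⟨hij, ⟨w⟩⟩
          simpa [SimpleGraph.dist_eq_zero_iff_eq_or_not_reachable] using this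
        have h1 : (T3 k).dist i j ≠ 1 := fun h =>
          hadj (SimpleGraph.dist_eq_one_iff_adj.mp h)
        have : (T3 k).dist i j = 2 := by omega
        rw [this]; norm_num
      · intro h
        rcases h with h | h | h
        · exact hadj (adj_iff.mpr ⟨hij, Or.inl h⟩)
        · exact hadj (adj_iff.mpr ⟨hij, Or.inr (Or.inl h)⟩)
        · exact hadj (adj_iff.mpr ⟨hij, Or.inr (Or.inr h)⟩)

lemma distMatrix_eq : distMatrix (T3 k) = Dex k := by
  ext i j; exact dist_eq i j

/-- partner vertex -/
def pf (i : Fin (k + 7)) : Fin (k + 7) := ⟨pv i.val, by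
  by_cases h : 1 ≤ i.val ∧ i.val ≤ 6
  · have := pv_mem h.1 h.2; omega
  · rw [pv_fix h]; exact i.isLt⟩

@[simp] lemma pf_val (i : Fin (k + 7)) : (pf i).val = pv i.val := rfl

lemma pf_pf (i : Fin (k + 7)) : pf (pf i) = i := by
  apply Fin.ext; simp [pv_pv]

lemma pf_ne {i : Fin (k + 7)} (h1 : 1 ≤ i.val) (h2 : i.val ≤ 6) : pf i ≠ i := by
  have := pv_mem h1 h2
  intro h
  exact this.2.2 (congrArg Fin.val h)

lemma sum_two {n : ℕ} (f : Fin n → ℝ) (a b : Fin n) (hab : a ≠ b)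
    (h : ∀ m, m ≠ a → m ≠ b → f m = 0) : ∑ m, f m = f a + f b := by
  classical
  have hs := Finset.sum_subset (Finset.subset_univ ({a, b} : Finset (Fin n)))
    (fun x _ hx => by
      simp only [Finset.mem_insert, Finset.mem_singleton] at hx
      push_neg at hx
      exact h x hx.1 hx.2)
  rw [← hs, Finset.sum_pair hab]

noncomputable def Km (k : ℕ) (t : ℝ) : Matrix (Fin (k + 7)) (Fin (k + 7)) ℝ := fun i j =>
  if i = j then t + 2 else if pr i.val j.val then 1 else 0

noncomputable def Lm (k : ℕ) (t : ℝ) : Matrix (Fin (k + 7)) (Fin (k + 7)) ℝ := fun i j =>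
  if i = j then (if 1 ≤ i.val ∧ i.val ≤ 6 then (t + 2) / ((t + 1) * (t + 3)) else 1 / (t + 2))
  else if pr i.val j.val then -1 / ((t + 1) * (t + 3)) else 0

lemma Km_apply_ne_zero {t : ℝ} {i m : Fin (k + 7)} (h1 : m ≠ i) (h2 : m ≠ pf i) :
    Km k t i m = 0 := by
  unfold Km
  rw [if_neg (fun h => h1 h.symm), if_neg]
  intro hp
  rw [pr_iff] at hp
  exact h2 (Fin.ext hp.2.2)

lemma Lm_apply_ne_zero {t : ℝ} {i m : Fin (k + 7)} (h1 : m ≠ i) (h2 : m ≠ pf i) :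
    Lm k t i m = 0 := by
  unfold Lm
  rw [if_neg (fun h => h1 h.symm), if_neg]
  intro hp
  rw [pr_iff] at hp
  exact h2 (Fin.ext hp.2.2)

lemma Km_mul_Lm (t : ℝ) (ht : 3 ≤ t) : Km k t * Lm k t = 1 := by
  have ht1 : t + 1 ≠ 0 := by linarith
  have ht2 : t + 2 ≠ 0 := by linarith
  have ht3 : t + 3 ≠ 0 := by linarith
  ext i j
  rw [Matrix.mul_apply]
  by_cases htri : 1 ≤ i.val ∧ i.val ≤ 6
  · -- triangle vertex: two nonzero entries in row i
    have hne : i ≠ pf i := (pf_ne htri.1 htri.2).symm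
    rw [sum_two _ i (pf i) hne
      (fun m hm1 hm2 => by rw [Km_apply_ne_zero hm1 hm2, zero_mul])]
    have hKii : Km k t i i = t + 2 := if_pos rfl
    have hKip : Km k t i (pf i) = 1 := by
      unfold Km
      rw [if_neg hne]
      exact if_pos (pr_iff.mpr ⟨htri.1, htri.2, rfl⟩)
    rw [hKii, hKip]
    by_cases hji : j = i
    · subst hji
      have hLjj : Lm k t j j = (t + 2) / ((t + 1) * (t + 3)) := by
        unfold Lm; rw [if_pos rfl, if_pos htri]
      have hLpj : Lm k t (pf j) j = -1 / ((t + 1) * (t + 3)) := by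
        unfold Lm
        rw [if_neg (pf_ne htri.1 htri.2)]
        exact if_pos (pr_symm (pr_iff.mpr ⟨htri.1, htri.2, rfl⟩))
      rw [hLjj, hLpj, Matrix.one_apply_eq]
      field_simp
      ring
    · by_cases hjp : j = pf i
      · subst hjp
        have h1 : Lm k t i (pf i) = -1 / ((t + 1) * (t + 3)) := by
          unfold Lm
          rw [if_neg hne]
          exact if_pos (pr_iff.mpr ⟨htri.1, htri.2, rfl⟩)
        have htri' : 1 ≤ (pf i).val ∧ (pf i).val ≤ 6 := by
          have := pv_mem htri.1 htri.2; exact ⟨this.1, this.2.1⟩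
        have h2 : Lm k t (pf i) (pf i) = (t + 2) / ((t + 1) * (t + 3)) := by
          unfold Lm; rw [if_pos rfl, if_pos htri']
        rw [h1, h2, Matrix.one_apply_ne (fun h => hne h)]
        field_simp
        ring
      · have h1 : Lm k t i j = 0 := Lm_apply_ne_zero hji hjp
        have h2 : Lm k t (pf i) j = 0 := by
          apply Lm_apply_ne_zero hjp
          rw [pf_pf]
          exact hji
        rw [h1, h2, Matrix.one_apply_ne (Ne.symm hji)]
        ring
  · -- non-triangle vertex: single nonzero entry in row i
    have hpf : pf i = i := Fin.ext (pv_fix htri)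
    rw [Fintype.sum_eq_single i (fun m hm => by
      rw [Km_apply_ne_zero hm (by rw [hpf]; exact hm), zero_mul])]
    have hKii : Km k t i i = t + 2 := if_pos rfl
    rw [hKii]
    by_cases hji : j = i
    · subst hji
      have hLjj : Lm k t j j = 1 / (t + 2) := by
        unfold Lm; rw [if_pos rfl, if_neg htri]
      rw [hLjj, Matrix.one_apply_eq]
      field_simp
    · have hL : Lm k t i j = 0 := Lm_apply_ne_zero hji (by rw [hpf]; exact hji)
      rw [hL, Matrix.one_apply_ne (Ne.symm hji)]
      ring

lemma det_pair (t : ℝ) : (!![t+2,1;1,t+2] : Matrix (Fin 2) (Fin 2) ℝ).det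
    = (t+1)*(t+3) := by
  rw [Matrix.det_fin_two_of]; ring

lemma detKm_base (t : ℝ) : (Km 0 t).det = (t + 2) ^ (0+1) * ((t + 1) * (t + 3)) ^ 3 := by
  have h4 : (!![t+2,1,0,0; 1,t+2,0,0; 0,0,t+2,1; 0,0,1,t+2] : Matrix (Fin 4) (Fin 4) ℝ).det
      = ((t+1)*(t+3))^2 := by
    have e : (!![t+2,1,0,0; 1,t+2,0,0; 0,0,t+2,1; 0,0,1,t+2] : Matrix (Fin 4) (Fin 4) ℝ)
        = (Matrix.fromBlocks !![t+2,1;1,t+2] 0 0 !![t+2,1;1,t+2]).submatrix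
            finSumFinEquiv.symm finSumFinEquiv.symm := by
      ext i j; fin_cases i <;> fin_cases j <;> rfl
    rw [e, Matrix.det_submatrix_equiv_self, Matrix.det_fromBlocks_zero₂₁, det_pair]
    ring
  have h6 : (!![t+2,1,0,0,0,0; 1,t+2,0,0,0,0; 0,0,t+2,1,0,0; 0,0,1,t+2,0,0;
      0,0,0,0,t+2,1; 0,0,0,0,1,t+2] : Matrix (Fin 6) (Fin 6) ℝ).det = ((t+1)*(t+3))^3 := by
    have e : (!![t+2,1,0,0,0,0; 1,t+2,0,0,0,0; 0,0,t+2,1,0,0; 0,0,1,t+2,0,0;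
        0,0,0,0,t+2,1; 0,0,0,0,1,t+2] : Matrix (Fin 6) (Fin 6) ℝ)
        = (Matrix.fromBlocks !![t+2,1;1,t+2] 0 0
            !![t+2,1,0,0; 1,t+2,0,0; 0,0,t+2,1; 0,0,1,t+2]).submatrix
            finSumFinEquiv.symm finSumFinEquiv.symm := by
      ext i j; fin_cases i <;> fin_cases j <;> rfl
    rw [e, Matrix.det_submatrix_equiv_self, Matrix.det_fromBlocks_zero₂₁, det_pair, h4]
    ring
  have e : Km 0 t = (Matrix.fromBlocks !![t+2] 0 0
      (!![t+2,1,0,0,0,0; 1,t+2,0,0,0,0; 0,0,t+2,1,0,0; 0,0,1,t+2,0,0;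
        0,0,0,0,t+2,1; 0,0,0,0,1,t+2] : Matrix (Fin 6) (Fin 6) ℝ)).submatrix
      finSumFinEquiv.symm finSumFinEquiv.symm := by
    ext i j; fin_cases i <;> fin_cases j <;> rfl
  rw [e, Matrix.det_submatrix_equiv_self, Matrix.det_fromBlocks_zero₂₁, h6,
    Matrix.det_fin_one_of]
  ring

lemma detKm (k : ℕ) (t : ℝ) : (Km k t).det = (t + 2) ^ (k + 1) * ((t + 1) * (t + 3)) ^ 3 := by
  induction k with
  | zero => exact detKm_base t
  | succ n ih =>
      have hsub : (Km (n + 1) t).submatrix Fin.castSucc Fin.castSucc = Km n t := by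
        ext a b
        simp [Km, Matrix.submatrix_apply, Fin.castSucc_inj]
      have hlast : ∀ j : Fin (n + 1 + 7), j ≠ Fin.last (n + 7) →
          Km (n + 1) t (Fin.last (n + 7)) j = 0 := by
        intro j hj
        unfold Km
        rw [if_neg (fun h => hj h.symm), if_neg]
        intro hp
        unfold pr at hp
        have hv : (Fin.last (n + 7)).val = n + 7 := rfl
        omega
      rw [Matrix.det_succ_row (Km (n + 1) t) (Fin.last (n + 7))]
      rw [Fintype.sum_eq_single (Fin.last (n + 7)) (fun j hj => by
        rw [hlast j hj, mul_zero, zero_mul])]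
      have hsign : ((-1 : ℝ)) ^ ((Fin.last (n + 7) : ℕ) + (Fin.last (n + 7) : ℕ)) = 1 :=
        Even.neg_one_pow ⟨n + 7, rfl⟩
      have hdiag : Km (n + 1) t (Fin.last (n + 7)) (Fin.last (n + 7)) = t + 2 := if_pos rfl
      rw [hsign, hdiag, Fin.succAbove_last, hsub, ih]
      ring

noncomputable def Um (k : ℕ) : Matrix (Fin (k + 7)) (Fin 2) ℝ := fun i c =>
  if c = 0 then 1 else if i = 0 then 1 else 0

noncomputable def Vm (k : ℕ) : Matrix (Fin 2) (Fin (k + 7)) ℝ := fun c j =>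
  if c = 0 then (if j = 0 then -1 else -2) else (if j = 0 then -1 else 1)

lemma decomp (t : ℝ) :
    t • (1 : Matrix (Fin (k + 7)) (Fin (k + 7)) ℝ) - Dex k = Km k t + Um k * Vm k := by
  ext i j
  rw [Matrix.add_apply, Matrix.mul_apply, Fin.sum_univ_two, Matrix.sub_apply,
    Matrix.smul_apply]
  have e0 : ((0 : Fin 2) = 0) = True := by simp
  have e1 : ((1 : Fin 2) = 0) = False := by simp
  simp only [Um, Vm, e0, e1, if_true, if_false, smul_eq_mul]
  unfold Km Dex
  rw [Matrix.one_apply]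
  by_cases hij : i = j
  · subst hij
    rw [if_pos rfl, if_pos rfl, if_pos rfl]
    by_cases hi0 : i = 0
    · rw [if_pos hi0, if_pos hi0, if_pos hi0]; ring
    · rw [if_neg hi0, if_neg hi0, if_neg hi0]; ring
  · rw [if_neg hij, if_neg hij, if_neg hij]
    by_cases hi0 : i = 0
    · have hj0 : j ≠ 0 := fun h => hij (hi0.trans h.symm)
      have hpr : ¬ pr i.val j.val := by
        rw [pr_iff]
        have hv : i.val = 0 := by rw [hi0]; rfl
        omega
      rw [if_pos (Or.inl hi0), if_neg hpr, if_pos hi0, if_neg hj0, if_neg hj0]; ring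
    · by_cases hj0 : j = 0
      · have hpr : ¬ pr i.val j.val := by
          rw [pr_iff]
          have hv : j.val = 0 := by rw [hj0]; rfl
          rintro ⟨a, b, c⟩
          have := pv_mem a b
          omega
        rw [if_pos (Or.inr (Or.inl hj0)), if_neg hpr, if_neg hi0, if_pos hj0, if_pos hj0]
        ring
      · by_cases hpr : pr i.val j.val
        · rw [if_pos (Or.inr (Or.inr hpr)), if_pos hpr, if_neg hi0, if_neg hj0, if_neg hj0]
          ring
        · rw [if_neg (fun h => h.elim hi0 (fun h' => h'.elim hj0 hpr)), if_neg hpr,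
            if_neg hi0, if_neg hj0, if_neg hj0]
          ring
noncomputable def LUm (k : ℕ) (t : ℝ) : Matrix (Fin (k + 7)) (Fin 2) ℝ := fun i c =>
  if c = 0 then (if 1 ≤ i.val ∧ i.val ≤ 6 then 1 / (t + 3) else 1 / (t + 2))
  else (if i = 0 then 1 / (t + 2) else 0)

lemma Lm_mul_Um (t : ℝ) (ht : 3 ≤ t) : Lm k t * Um k = LUm k t := by
  have ht1 : t + 1 ≠ 0 := by linarith
  have ht2 : t + 2 ≠ 0 := by linarith
  have ht3 : t + 3 ≠ 0 := by linarith
  ext i c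
  rw [Matrix.mul_apply]
  by_cases htri : 1 ≤ i.val ∧ i.val ≤ 6
  · have hne : i ≠ pf i := (pf_ne htri.1 htri.2).symm
    rw [sum_two _ i (pf i) hne (fun m h1 h2 => by rw [Lm_apply_ne_zero h1 h2, zero_mul])]
    have hLii : Lm k t i i = (t + 2) / ((t + 1) * (t + 3)) := by
      unfold Lm; rw [if_pos rfl, if_pos htri]
    have hLip : Lm k t i (pf i) = -1 / ((t + 1) * (t + 3)) := by
      unfold Lm
      rw [if_neg hne]
      exact if_pos (pr_iff.mpr ⟨htri.1, htri.2, rfl⟩)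
    have hi0 : i ≠ 0 := by
      intro h
      have : i.val = 0 := by rw [h]; rfl
      omega
    have hp0 : pf i ≠ 0 := by
      intro h
      have h2 := pv_mem htri.1 htri.2
      have : (pf i).val = 0 := by rw [h]; rfl
      rw [pf_val] at this
      omega
    have e0 : ((0 : Fin 2) = 0) = True := by simp
    fin_cases c
    · simp only [Fin.zero_eta, Um, LUm, hLii, hLip, e0, if_true]
      rw [if_pos htri, mul_one, mul_one, ← add_div,
        show t + 2 + -1 = (t + 1) * 1 by ring, mul_div_mul_left _ _ ht1]
    · simp only [Fin.mk_one, Um, LUm, hLii, hLip]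
      have e1 : ((1 : Fin 2) = 0) = False := by simp
      simp only [e1, if_false, if_neg hi0, if_neg hp0]
      ring
  · have hpf : pf i = i := Fin.ext (pv_fix htri)
    rw [Fintype.sum_eq_single i (fun m hm => by
      rw [Lm_apply_ne_zero hm (by rw [hpf]; exact hm), zero_mul])]
    have hLii : Lm k t i i = 1 / (t + 2) := by
      unfold Lm; rw [if_pos rfl, if_neg htri]
    have e0 : ((0 : Fin 2) = 0) = True := by simp
    fin_cases c
    · simp only [Fin.zero_eta, Um, LUm, hLii, e0, if_true]
      rw [if_neg htri]
      ring
    · simp only [Fin.mk_one, Um, LUm, hLii]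
      have e1 : ((1 : Fin 2) = 0) = False := by simp
      simp only [e1, if_false]
      by_cases hi0 : i = 0 <;> simp [hi0]

lemma sum_class (g : Fin (k + 7) → ℝ) (a b c : ℝ)
    (h0 : ∀ m : Fin (k + 7), m.val = 0 → g m = a)
    (h1 : ∀ m : Fin (k + 7), 1 ≤ m.val → m.val ≤ 6 → g m = b)
    (h2 : ∀ m : Fin (k + 7), 7 ≤ m.val → g m = c) :
    ∑ m, g m = a + 6 * b + k * c := by
  classical
  have key : ∀ m : Fin (k + 7), g m =
      (fun v : ℕ => if v = 0 then a else if v ≤ 6 then b else c) m.val := by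
    intro m
    by_cases e0 : m.val = 0
    · simp [e0, h0 m e0]
    · by_cases e6 : m.val ≤ 6
      · simp [e0, e6, h1 m (by omega) e6]
      · simp [e0, e6, h2 m (by omega)]
  rw [Finset.sum_congr rfl (fun m _ => key m)]
  rw [Fin.sum_univ_eq_sum_range (fun v : ℕ => if v = 0 then a else if v ≤ 6 then b else c)]
  rw [Finset.range_eq_Ico, ← Finset.sum_Ico_consecutive _ (by omega : 0 ≤ 7) (by omega : 7 ≤ k + 7)]
  have hhead : ∑ v ∈ Finset.Ico 0 7, (if v = 0 then a else if v ≤ 6 then b else c)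
      = a + 6 * b := by
    rw [← Finset.range_eq_Ico]
    simp [Finset.sum_range_succ]
    ring
  have htail : ∑ v ∈ Finset.Ico 7 (k + 7), (if v = 0 then a else if v ≤ 6 then b else c)
      = k * c := by
    have hc : ∀ v ∈ Finset.Ico 7 (k + 7),
        (if v = 0 then a else if v ≤ 6 then b else c) = c := fun v hv => by
      rw [Finset.mem_Ico] at hv
      rw [if_neg (by omega), if_neg (by omega)]
    rw [Finset.sum_congr rfl hc, Finset.sum_const, Nat.card_Ico]
    simp [mul_comm]
  rw [hhead, htail]

lemma VLU (t : ℝ) : Vm k * LUm k t =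
    !![-1/(t+2) - 12/(t+3) - 2*(k:ℝ)/(t+2), -1/(t+2);
                 -1/(t+2) + 6/(t+3) + (k:ℝ)/(t+2), -1/(t+2)] := by
  have e1 : ((1 : Fin 2) = 0) = False := by simp
  have hv0 : ∀ m : Fin (k + 7), m.val = 0 → m = 0 := fun m hm => Fin.ext hm
  have hvn : ∀ m : Fin (k + 7), m.val ≠ 0 → (m = 0) = False :=
    fun m hm => eq_false (fun h => hm (by rw [h]; rfl))
  ext c c'
  rw [Matrix.mul_apply]
  fin_cases c <;> fin_cases c' <;>
    simp only [Fin.zero_eta, Fin.mk_one, Vm, LUm, e1, if_false, if_true, eq_self_iff_true]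
  · rw [sum_class _ (-1/(t+2)) (-2/(t+3)) (-2/(t+2))
      (fun m hm => by
        rw [if_pos (hv0 m hm), if_neg (by omega : ¬(1 ≤ m.val ∧ m.val ≤ 6))]; ring)
      (fun m hm1 hm2 => by
        simp only [hvn m (by omega), if_false]
        rw [if_pos (⟨hm1, hm2⟩ : 1 ≤ m.val ∧ m.val ≤ 6)]; ring)
      (fun m hm => by
        simp only [hvn m (by omega), if_false]
        rw [if_neg (by omega : ¬(1 ≤ m.val ∧ m.val ≤ 6))]; ring)]
    norm_num
    ring
  · rw [sum_class _ (-1/(t+2)) 0 0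
      (fun m hm => by rw [if_pos (hv0 m hm), if_pos (hv0 m hm)]; ring)
      (fun m hm1 hm2 => by simp only [hvn m (by omega), if_false]; ring)
      (fun m hm => by simp only [hvn m (by omega), if_false]; ring)]
    norm_num
  · rw [sum_class _ (-1/(t+2)) (1/(t+3)) (1/(t+2))
      (fun m hm => by
        rw [if_pos (hv0 m hm), if_neg (by omega : ¬(1 ≤ m.val ∧ m.val ≤ 6))]; ring)
      (fun m hm1 hm2 => by
        simp only [hvn m (by omega), if_false]
        rw [if_pos (⟨hm1, hm2⟩ : 1 ≤ m.val ∧ m.val ≤ 6)]; ring)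
      (fun m hm => by
        simp only [hvn m (by omega), if_false]
        rw [if_neg (by omega : ¬(1 ≤ m.val ∧ m.val ≤ 6))]; ring)]
    norm_num
    ring
  · rw [sum_class _ (-1/(t+2)) 0 0
      (fun m hm => by rw [if_pos (hv0 m hm), if_pos (hv0 m hm)]; ring)
      (fun m hm1 hm2 => by simp only [hvn m (by omega), if_false]; ring)
      (fun m hm => by simp only [hvn m (by omega), if_false]; ring)]
    norm_num

lemma eval_charpoly_eq {n : ℕ} (M : Matrix (Fin n) (Fin n) ℝ) (t : ℝ) :
    (M.charpoly).eval t = (t • (1 : Matrix (Fin n) (Fin n) ℝ) - M).det := by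
  rw [Matrix.charpoly]
  rw [show Polynomial.eval t (M.charmatrix.det) =
      (Polynomial.evalRingHom t) (M.charmatrix.det) from rfl]
  rw [RingHom.map_det]
  congr 1
  ext i j
  simp only [RingHom.mapMatrix_apply, Matrix.map_apply]
  by_cases h : i = j
  · subst h
    rw [Matrix.charmatrix_apply_eq]
    simp [Matrix.sub_apply, Matrix.smul_apply, Matrix.one_apply_eq, smul_eq_mul]
  · rw [Matrix.charmatrix_apply_ne _ _ _ h]
    simp [Matrix.sub_apply, Matrix.smul_apply, Matrix.one_apply_ne h]

lemma key_det (t : ℝ) (ht : 3 ≤ t) :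
    (t + 2) * (Matrix.charpoly (distMatrix (T3 k))).eval t =
    (t+1)^3 * (t+3)^2 * (t+2)^k *
      (t^3 - (2*(k:ℝ)+7)*t^2 - (7*(k:ℝ)+24)*t - (3*(k:ℝ)+12)) := by
  have ht1 : t + 1 ≠ 0 := by linarith
  have ht2 : t + 2 ≠ 0 := by linarith
  have ht3 : t + 3 ≠ 0 := by linarith
  rw [eval_charpoly_eq, distMatrix_eq, decomp t]
  have h1 : Km k t + Um k * Vm k = Km k t * (1 + (Lm k t * Um k) * Vm k) := by
    rw [Matrix.mul_add, Matrix.mul_one, ← Matrix.mul_assoc (Km k t),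
      ← Matrix.mul_assoc (Km k t), Km_mul_Lm t ht, Matrix.one_mul]
  rw [h1, Matrix.det_mul, detKm, Lm_mul_Um t ht, Matrix.det_one_add_mul_comm, VLU]
  rw [Matrix.det_fin_two]
  simp only [Matrix.add_apply, Matrix.one_apply_eq, Matrix.one_apply_ne, Matrix.of_apply,
    Matrix.cons_val', Matrix.cons_val_zero, Matrix.cons_val_one, Matrix.head_cons,
    Matrix.empty_val', Matrix.cons_val_fin_one, Matrix.head_fin_const, ne_eq,
    zero_ne_one, not_false_eq_true, one_ne_zero]
  field_simp
  ring

noncomputable def phi (k : ℕ) : Polynomial ℝ :=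
  X^3 - C (2*(k:ℝ)+7) * X^2 - C (7*(k:ℝ)+24) * X - C (3*(k:ℝ)+12)

lemma phi_eval (k : ℕ) (x : ℝ) : (phi k).eval x
    = x^3 - (2*(k:ℝ)+7)*x^2 - (7*(k:ℝ)+24)*x - (3*(k:ℝ)+12) := by
  simp [phi]

lemma poly_id (k : ℕ) : (X + C (2:ℝ)) * (distMatrix (T3 k)).charpoly
    = (X + C 1)^3 * (X + C 3)^2 * (X + C 2)^k * phi k := by
  apply Polynomial.eq_of_infinite_eval_eq
  apply Set.Infinite.mono (s := Set.Ici (3:ℝ)) ?_ ?_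
  case _ =>
    intro x hx
    simp only [Set.mem_setOf_eq, eval_mul, eval_pow, eval_add, eval_X, eval_C, phi_eval]
    have := key_det (k := k) x hx
    linarith [this]
  case _ => exact Set.Ici_infinite 3

lemma phi_factor (k : ℕ) : ∃ s1 s2 s3 : ℝ,
    s1 ∈ Set.Ioo (-(1:ℝ)/2) (2*(k:ℝ)+15) ∧ s2 ∈ Set.Ioo (-(3:ℝ)/4) (-(1:ℝ)/2) ∧
    s3 ∈ Set.Ioo (-(3:ℝ)) (-(1:ℝ)) ∧
    phi k = (X - C s1) * (X - C s2) * (X - C s3) := by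
  have hk0 : (0:ℝ) ≤ (k:ℝ) := Nat.cast_nonneg k
  have hcont : ∀ a b : ℝ, ContinuousOn (fun x => (phi k).eval x) (Set.Icc a b) :=
    fun a b => ((phi k).continuous).continuousOn
  have em3 : (phi k).eval (-3) = -30 := by rw [phi_eval]; ring
  have em1 : (phi k).eval (-1) = 2*(k:ℝ) + 4 := by rw [phi_eval]; ring
  have em34 : (phi k).eval (-(3:ℝ)/4) = 9/8*(k:ℝ) + 105/64 := by rw [phi_eval]; ring
  have em12 : (phi k).eval (-(1:ℝ)/2) = -(15:ℝ)/8 := by rw [phi_eval]; ring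
  have emB : (phi k).eval (2*(k:ℝ)+15) = 18*(k:ℝ)^2 + 324*(k:ℝ) + 1428 := by
    rw [phi_eval]; ring
  -- s3
  have h3 : (0:ℝ) ∈ Set.Ioo ((phi k).eval (-3)) ((phi k).eval (-1)) := by
    rw [em3, em1]; constructor <;> [norm_num; linarith]
  obtain ⟨s3, hs3mem, hs3⟩ := intermediate_value_Ioo (by norm_num : (-3:ℝ) ≤ -1)
    (hcont (-3) (-1)) h3
  -- s2
  have h2 : (0:ℝ) ∈ Set.Ioo ((phi k).eval (-(1:ℝ)/2)) ((phi k).eval (-(3:ℝ)/4)) := by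
    rw [em34, em12]; constructor <;> [norm_num; linarith]
  obtain ⟨s2, hs2mem, hs2⟩ := intermediate_value_Ioo' (by norm_num : (-(3:ℝ)/4) ≤ -(1:ℝ)/2)
    (hcont (-(3:ℝ)/4) (-(1:ℝ)/2)) h2
  -- s1
  have h1 : (0:ℝ) ∈ Set.Ioo ((phi k).eval (-(1:ℝ)/2)) ((phi k).eval (2*(k:ℝ)+15)) := by
    rw [em12, emB]; constructor <;> [norm_num; nlinarith]
  obtain ⟨s1, hs1mem, hs1⟩ := intermediate_value_Ioo (by nlinarith : (-(1:ℝ)/2) ≤ 2*(k:ℝ)+15)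
    (hcont (-(1:ℝ)/2) (2*(k:ℝ)+15)) h1
  refine ⟨s1, s2, s3, hs1mem, hs2mem, hs3mem, ?_⟩
  -- Vieta
  obtain ⟨hs1a, hs1b⟩ := hs1mem
  obtain ⟨hs2a, hs2b⟩ := hs2mem
  obtain ⟨hs3a, hs3b⟩ := hs3mem
  have d12 : s1 - s2 ≠ 0 := by intro h; nlinarith
  have d13 : s1 - s3 ≠ 0 := by intro h; nlinarith
  have d23 : s2 - s3 ≠ 0 := by intro h; nlinarith
  have q1 : s1^3 - (2*(k:ℝ)+7)*s1^2 - (7*(k:ℝ)+24)*s1 - (3*(k:ℝ)+12) = 0 := by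
    rw [← phi_eval]; exact hs1
  have q2 : s2^3 - (2*(k:ℝ)+7)*s2^2 - (7*(k:ℝ)+24)*s2 - (3*(k:ℝ)+12) = 0 := by
    rw [← phi_eval]; exact hs2
  have q3 : s3^3 - (2*(k:ℝ)+7)*s3^2 - (7*(k:ℝ)+24)*s3 - (3*(k:ℝ)+12) = 0 := by
    rw [← phi_eval]; exact hs3
  have E12 : s1^2 + s1*s2 + s2^2 - (2*(k:ℝ)+7)*(s1+s2) - (7*(k:ℝ)+24) = 0 := by
    apply mul_left_cancel₀ d12
    linear_combination q1 - q2
  have E23 : s2^2 + s2*s3 + s3^2 - (2*(k:ℝ)+7)*(s2+s3) - (7*(k:ℝ)+24) = 0 := by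
    apply mul_left_cancel₀ d23
    linear_combination q2 - q3
  have hsum : s1 + s2 + s3 = 2*(k:ℝ)+7 := by
    apply mul_left_cancel₀ d13
    linear_combination E12 - E23
  have hq : s1*s2 + s2*s3 + s3*s1 = -(7*(k:ℝ)+24) := by
    linear_combination (-1 : ℝ) * E12 + (s1+s2)*hsum
  have hr : s1*s2*s3 = 3*(k:ℝ)+12 := by
    linear_combination q1 + s1*hq - s1^2*hsum
  have e1 : C (2*(k:ℝ)+7) = C (s1+s2+s3) := by rw [hsum]
  have e2 : C (7*(k:ℝ)+24) = - C (s1*s2+s2*s3+s3*s1) := by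
    rw [hq, map_neg, neg_neg]
  have e3 : C (3*(k:ℝ)+12) = C (s1*s2*s3) := by rw [hr]
  unfold phi
  rw [e1, e2, e3]
  simp only [map_add, map_mul]
  ring

theorem stmt15' (k : ℕ) (μ : Fin (k + 7) → ℝ) (hμ : Antitone μ)
    (hchar : (distMatrix (T3 k)).charpoly = ∏ i, (X - C (μ i))) :
    μ 1 < -1/2 ∧ (1 ≤ k → -3/4 < μ 1) := by
  classical
  obtain ⟨s1, s2, s3, hs1, hs2, hs3, hphi⟩ := phi_factor k
  obtain ⟨hs1a, hs1b⟩ := hs1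
  obtain ⟨hs2a, hs2b⟩ := hs2
  obtain ⟨hs3a, hs3b⟩ := hs3
  have hid : (X + C (2:ℝ)) * ∏ i, (X - C (μ i))
      = (X + C 1)^3 * (X + C 3)^2 * (X + C 2)^k *
        ((X - C s1) * (X - C s2) * (X - C s3)) := by
    rw [← hchar, ← hphi]
    exact poly_id k
  have hXpC : ∀ a : ℝ, (X : Polynomial ℝ) + C a = X - C (-a) := by
    intro a; rw [map_neg, sub_neg_eq_add]
  set MS : Multiset ℝ := Finset.univ.val.map μ with hMS
  set MR : Multiset ℝ := (-1 : ℝ) ::ₘ (-1) ::ₘ (-1) ::ₘ (-3) ::ₘ (-3) ::ₘ s1 ::ₘ s2 ::ₘ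
    s3 ::ₘ Multiset.replicate k (-2) with hMR
  have hprodL : ((((-2 : ℝ) ::ₘ MS)).map (fun a => (X : Polynomial ℝ) - C a)).prod
      = (X + C (2:ℝ)) * ∏ i, (X - C (μ i)) := by
    rw [Multiset.map_cons, Multiset.prod_cons, hMS, Multiset.map_map]
    rw [Finset.prod_eq_multiset_prod]
    congr 1
    rw [hXpC 2]
  have hprodR : (MR.map (fun a => (X : Polynomial ℝ) - C a)).prod
      = (X + C 1)^3 * (X + C 3)^2 * (X + C 2)^k *
        ((X - C s1) * (X - C s2) * (X - C s3)) := by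
    rw [hMR]
    simp only [Multiset.map_cons, Multiset.prod_cons, Multiset.map_replicate,
      Multiset.prod_replicate]
    rw [hXpC 1, hXpC 3, hXpC 2]
    norm_num
    ring
  have hms : ((-2 : ℝ) ::ₘ MS) = MR := by
    have h := congrArg Polynomial.roots (hprodL.trans (hid.trans hprodR.symm))
    rwa [Polynomial.roots_multiset_prod_X_sub_C, Polynomial.roots_multiset_prod_X_sub_C] at h
  have hv1 : ((1 : Fin (k + 7)) : ℕ) = 1 := by
    rw [Fin.val_one']
    exact Nat.mod_eq_of_lt (by omega)
  have hone_le : ∀ i : Fin (k + 7), i ≠ 0 → (1 : Fin (k + 7)) ≤ i := by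
    intro i hi
    rw [Fin.le_def, hv1]
    have : i.val ≠ 0 := fun h => hi (Fin.ext h)
    omega
  have hlow : -3/4 < μ 1 := by
    have hmem1 : s1 ∈ ((-2 : ℝ) ::ₘ MS) := by
      rw [hms, hMR]
      simp [Multiset.mem_cons]
    have hmem2 : s2 ∈ ((-2 : ℝ) ::ₘ MS) := by
      rw [hms, hMR]
      simp [Multiset.mem_cons]
    have hone : s1 ∈ MS := by
      rcases Multiset.mem_cons.mp hmem1 with h | h
      · exfalso; rw [h] at hs1a; norm_num at hs1a
      · exact h
    have htwo : s2 ∈ MS := by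
      rcases Multiset.mem_cons.mp hmem2 with h | h
      · exfalso; rw [h] at hs2a; norm_num at hs2a
      · exact h
    obtain ⟨i, -, hi⟩ := Multiset.mem_map.mp hone
    obtain ⟨j, -, hj⟩ := Multiset.mem_map.mp htwo
    by_cases hi0 : i = 0
    · have hij : j ≠ 0 := by
        intro h
        rw [h, ← hi0, hi] at hj
        linarith
      have := hμ (hone_le j hij)
      rw [hj] at this
      linarith
    · have := hμ (hone_le i hi0)
      rw [hi] at this
      linarith
  refine ⟨?_, fun _ => hlow⟩
  by_contra hcon
  push_neg at hcon
  have h01le : (0 : Fin (k + 7)) ≤ 1 := by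
    rw [Fin.le_def, Fin.val_zero]
    exact Nat.zero_le _
  have hμ0 : -1/2 ≤ μ 0 := le_trans hcon (hμ h01le)
  set p : ℝ → Prop := fun x => -1/2 ≤ x with hp
  have hpd : DecidablePred p := Classical.decPred p
  have h01 : (0 : Fin (k + 7)) ≠ 1 := by
    intro h
    have := congrArg Fin.val h
    rw [hv1] at this
    simp at this
  have hsub : Multiset.map μ ((0 : Fin (k + 7)) ::ₘ (1 : Fin (k + 7)) ::ₘ 0) ≤ MS := by
    apply Multiset.map_le_map
    rw [Multiset.le_iff_count]
    intro a
    have hcu := Multiset.count_univ a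
    by_cases h0 : a = 0
    · subst h0
      rw [Multiset.count_cons_self, Multiset.count_cons_of_ne h01,
        Multiset.count_zero]
      omega
    · by_cases h1 : a = 1
      · subst h1
        rw [Multiset.count_cons_of_ne (fun h => h01 h.symm), Multiset.count_cons_self,
          Multiset.count_zero]
        omega
      · rw [Multiset.count_cons_of_ne h0, Multiset.count_cons_of_ne h1, Multiset.count_zero]
        omega
  have hc2 : 2 ≤ Multiset.countP p ((-2 : ℝ) ::ₘ MS) := by
    have step1 : Multiset.countP p
        (Multiset.map μ ((0 : Fin (k + 7)) ::ₘ (1 : Fin (k + 7)) ::ₘ 0)) = 2 := by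
      rw [Multiset.map_cons, Multiset.map_cons, Multiset.map_zero]
      rw [Multiset.countP_cons, Multiset.countP_cons, Multiset.countP_zero]
      rw [if_pos hμ0, if_pos hcon]
    have step2 := Multiset.countP_le_of_le p hsub
    have step3 := Multiset.countP_le_of_le p (Multiset.le_cons_self MS (-2 : ℝ))
    omega
  have hc1 : Multiset.countP p MR = 1 := by
    rw [hMR]
    rw [Multiset.countP_cons, Multiset.countP_cons, Multiset.countP_cons,
      Multiset.countP_cons, Multiset.countP_cons, Multiset.countP_cons,
      Multiset.countP_cons, Multiset.countP_cons]
    have hrep : Multiset.countP p (Multiset.replicate k (-2 : ℝ)) = 0 := by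
      rw [Multiset.countP_eq_zero]
      intro a ha
      rw [Multiset.eq_of_mem_replicate ha]
      rw [hp]
      norm_num
    rw [hrep]
    rw [if_neg (by rw [hp]; norm_num : ¬ p (-1)), if_neg (by rw [hp]; norm_num : ¬ p (-3)),
      if_pos (by rw [hp]; simp only []; linarith : p s1),
      if_neg (by rw [hp]; simp only []; push_neg; linarith : ¬ p s2),
      if_neg (by rw [hp]; simp only []; push_neg; linarith : ¬ p s3)]
  rw [hms, hc1] at hc2
  omega

end T3aux

/-- For every `k ≥ 0`, the second largest distance eigenvalue of `T₃ᵏ` is less than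
`-1/2`; moreover for `k ≥ 1` it lies in `(-3/4, -1/2)`. -/
theorem stmt15 (k : ℕ) (μ : Fin (k + 7) → ℝ) (hμ : Antitone μ)
    (hchar : (distMatrix (T3 k)).charpoly = ∏ i, (X - C (μ i))) :
    μ 1 < -1/2 ∧ (1 ≤ k → -3/4 < μ 1) := by
  exact T3aux.stmt15' k μ hμ hchar
end

section
/- For the graph T_4^t (t ≥ 1), the quotient matrix Q = [[0,2,2,1,t],[1,1,4,2,2t],[1,4,2,1,2t],[1,4,2,0,2t],[1,4,4,2,2t-2]] of the distance matrix with respect to the equitable partition {v}, {v_1,v_2}, {u_1,u_3}, {u_2}, {pendant vertices} has characteristic polynomial f(λ) = λ^5 - (2t+1)λ^4 - (15t+35)λ^3 - (35t+91)λ^2 - (26t+76)λ - 6t - 20. -/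
open Polynomial

/-- The tricyclic graph `T₄ᵗ` on `t + 6` vertices: triangles `0,1,2`, `0,3,4`, `0,4,5`
(the last two sharing the edge `{0,4}`), with `t` pendant edges at `0`. -/
def T4 (t : ℕ) : SimpleGraph (Fin (t + 6)) :=
  SimpleGraph.fromRel (fun a b =>
    (a = 0 ∧ b ≠ 0) ∨ (a.val, b.val) ∈ [(1, 2), (3, 4), (4, 5)])

lemma T4_adj (t : ℕ) (x y : Fin (t+6)) :
    (T4 t).Adj x y ↔
    x ≠ y ∧ (x.val = 0 ∨ y.val = 0 ∨
      (x.val, y.val) ∈ [(1, 2), (3, 4), (4, 5)] ∨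
      (y.val, x.val) ∈ [(1, 2), (3, 4), (4, 5)]) := by
  rw [T4, SimpleGraph.fromRel_adj]
  have h0 : ∀ z : Fin (t+6), z = 0 ↔ z.val = 0 := by
    intro z; rw [Fin.ext_iff]; simp
  constructor
  · rintro ⟨hne, h⟩
    refine ⟨hne, ?_⟩
    rcases h with (⟨h,_⟩|h)|(⟨h,_⟩|h) <;> simp_all [h0]
  · rintro ⟨hne, h⟩
    refine ⟨hne, ?_⟩
    rcases h with h|h|h|h
    · refine Or.inl (Or.inl ⟨(h0 x).mpr h, fun hy => hne ?_⟩); rw [(h0 x).mpr h, hy]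
    · refine Or.inr (Or.inl ⟨(h0 y).mpr h, fun hx => hne ?_⟩); rw [(h0 y).mpr h, hx]
    · exact Or.inl (Or.inr h)
    · exact Or.inr (Or.inr h)

lemma T4_dist (t : ℕ) (x y : Fin (t+6)) :
    (T4 t).dist x y = if x = y then 0
      else if x.val = 0 ∨ y.val = 0 ∨
        (x.val, y.val) ∈ [(1, 2), (3, 4), (4, 5)] ∨
        (y.val, x.val) ∈ [(1, 2), (3, 4), (4, 5)] then 1 else 2 := by
  by_cases hxy : x = y
  · simp [hxy]
  rw [if_neg hxy]
  by_cases hadj : (T4 t).Adj x y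
  · rw [if_pos (((T4_adj t x y).mp hadj).2)]
    exact SimpleGraph.dist_eq_one_iff_adj.mpr hadj
  · have hcond : ¬ (x.val = 0 ∨ y.val = 0 ∨
        (x.val, y.val) ∈ [(1, 2), (3, 4), (4, 5)] ∨
        (y.val, x.val) ∈ [(1, 2), (3, 4), (4, 5)]) := by
      intro h; exact hadj ((T4_adj t x y).mpr ⟨hxy, h⟩)
    rw [if_neg hcond]
    push_neg at hcond
    have hx0 : x ≠ 0 := fun h => hcond.1 (by rw [h]; simp)
    have hy0 : y ≠ 0 := fun h => hcond.2.1 (by rw [h]; simp)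
    have hax : (T4 t).Adj x 0 := (T4_adj t x 0).mpr ⟨hx0, Or.inr (Or.inl (by simp))⟩
    have hay : (T4 t).Adj 0 y := (T4_adj t 0 y).mpr ⟨fun h => hy0 h.symm, Or.inl (by simp)⟩
    have h2 : (T4 t).dist x y ≤ 2 := by
      simpa using SimpleGraph.dist_le
        (SimpleGraph.Walk.cons hax (SimpleGraph.Walk.cons hay SimpleGraph.Walk.nil))
    have h1 : 0 < (T4 t).dist x y :=
      SimpleGraph.Reachable.pos_dist_of_ne
        ⟨SimpleGraph.Walk.cons hax (SimpleGraph.Walk.cons hay SimpleGraph.Walk.nil)⟩ hxy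
    have hne1 : (T4 t).dist x y ≠ 1 := fun h =>
      hadj (SimpleGraph.dist_eq_one_iff_adj.mp h)
    omega

lemma dist_mk (t a b : ℕ) (ha : a < t+6) (hb : b < t+6) :
    distMatrix (T4 t) ⟨a, ha⟩ ⟨b, hb⟩ = if a = b then 0
      else if a = 0 ∨ b = 0 ∨
        (a, b) ∈ [(1, 2), (3, 4), (4, 5)] ∨
        (b, a) ∈ [(1, 2), (3, 4), (4, 5)] then 1 else 2 := by
  rw [distMatrix]
  rw [T4_dist]
  simp only [Fin.mk.injEq]
  split_ifs <;> norm_num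

lemma sum_split (t : ℕ) (F : Fin (t+6) → ℝ) (g : ℕ → ℝ)
    (hg : ∀ k, 6 ≤ k → ∀ (h2 : k < t+6), F ⟨k, h2⟩ = g k) :
    ∑ l, F l = F ⟨0, by omega⟩ + F ⟨1, by omega⟩ + F ⟨2, by omega⟩ + F ⟨3, by omega⟩
      + F ⟨4, by omega⟩ + F ⟨5, by omega⟩ + ∑ k ∈ Finset.Ico 6 (t+6), g k := by
  set f : ℕ → ℝ := fun k => if h : k < t+6 then F ⟨k, h⟩ else 0 with hf
  have h1 : ∑ l, F l = ∑ l : Fin (t+6), f l.val := by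
    refine Finset.sum_congr rfl fun l _ => ?_
    simp [hf, l.isLt]
  rw [h1, Fin.sum_univ_eq_sum_range f, Finset.range_eq_Ico,
    ← Finset.sum_Ico_consecutive f (Nat.zero_le 6) (by omega : 6 ≤ t+6),
    ← Finset.range_eq_Ico]
  have h2 : ∑ k ∈ Finset.Ico 6 (t+6), f k = ∑ k ∈ Finset.Ico 6 (t+6), g k := by
    refine Finset.sum_congr rfl fun k hk => ?_
    rw [Finset.mem_Ico] at hk
    simp only [hf, dif_pos hk.2]
    exact hg k hk.1 hk.2
  rw [h2]
  have h3 : ∑ k ∈ Finset.range 6, f k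
      = F ⟨0, by omega⟩ + F ⟨1, by omega⟩ + F ⟨2, by omega⟩ + F ⟨3, by omega⟩
      + F ⟨4, by omega⟩ + F ⟨5, by omega⟩ := by
    simp [Finset.sum_range_succ, hf]
  rw [h3]

lemma tail_small (t : ℕ) (iv : ℕ) (h : iv < 6) (c c' : ℝ) :
    ∑ k ∈ Finset.Ico 6 (t+6), (if iv = k then c' else c) = t * c := by
  rw [Finset.sum_congr rfl (fun k hk => if_neg (by
    rw [Finset.mem_Ico] at hk; omega))]
  rw [Finset.sum_const, Nat.card_Ico, nsmul_eq_mul]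
  norm_num

lemma tail_pend (t : ℕ) (iv : ℕ) (h6 : 6 ≤ iv) (hlt : iv < t+6) :
    ∑ k ∈ Finset.Ico 6 (t+6), (if iv = k then (0:ℝ) else 2) = 2*t - 2 := by
  have h : ∀ k ∈ Finset.Ico 6 (t+6),
      (if iv = k then (0:ℝ) else 2) = 2 - (if iv = k then 2 else 0) := by
    intro k _; split_ifs <;> ring
  rw [Finset.sum_congr rfl h, Finset.sum_sub_distrib, Finset.sum_const, Nat.card_Ico,
    Finset.sum_ite_eq, if_pos (Finset.mem_Ico.mpr ⟨h6, hlt⟩), nsmul_eq_mul]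
  norm_num
  ring

set_option maxHeartbeats 2000000 in
/-- The partition `{v}, {v₁,v₂}, {u₁,u₃}, {u₂}, {pendants}` is equitable for the
distance matrix of `T₄ᵗ` with quotient matrix `Q`, whose characteristic polynomial is
`λ⁵ - (2t+1)λ⁴ - (15t+35)λ³ - (35t+91)λ² - (26t+76)λ - 6t - 20`. -/
theorem stmt17 (t : ℕ) (ht : 1 ≤ t)
    (p : Fin (t + 6) → Fin 5)
    (hp : ∀ i, p i = if i.val = 0 then 0
      else if i.val = 1 ∨ i.val = 2 then 1
      else if i.val = 3 ∨ i.val = 5 then 2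
      else if i.val = 4 then 3 else 4)
    (Q : Matrix (Fin 5) (Fin 5) ℝ)
    (hQ : Q = !![0, 2, 2, 1, (t : ℝ);
                 1, 1, 4, 2, 2 * (t : ℝ);
                 1, 4, 2, 1, 2 * (t : ℝ);
                 1, 4, 2, 0, 2 * (t : ℝ);
                 1, 4, 4, 2, 2 * (t : ℝ) - 2]) :
    (∀ (i : Fin (t + 6)) (j : Fin 5),
        ∑ l ∈ Finset.univ.filter (fun l => p l = j), distMatrix (T4 t) i l = Q (p i) j) ∧
    Q.charpoly = X ^ 5 - C (2 * (t : ℝ) + 1) * X ^ 4 - C (15 * (t : ℝ) + 35) * X ^ 3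
      - C (35 * (t : ℝ) + 91) * X ^ 2 - C (26 * (t : ℝ) + 76) * X
      - C (6 * (t : ℝ) + 20) := by
  constructor
  · intro i j
    rw [Finset.sum_filter]
    obtain ⟨iv, hi⟩ := i
    have hpk : ∀ k (hk6 : 6 ≤ k) (hk : k < t+6), p ⟨k, hk⟩ = 4 := by
      intro k hk6 hk
      rw [hp]
      simp only
      rw [if_neg (by omega), if_neg (by omega), if_neg (by omega), if_neg (by omega)]
    have hg : ∀ k, 6 ≤ k → ∀ (h2 : k < t+6),
        (if p ⟨k,h2⟩ = j then distMatrix (T4 t) ⟨iv,hi⟩ ⟨k,h2⟩ else 0)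
        = (if (4:Fin 5) = j then
            (if iv = k then (0:ℝ) else if iv = 0 then 1 else 2) else 0) := by
      intro k hk6 hk
      rw [hpk k hk6 hk, dist_mk]
      rcases eq_or_ne (4:Fin 5) j with h4 | h4
      · rw [if_pos h4, if_pos h4]
        rcases eq_or_ne iv k with he | he
        · rw [if_pos he, if_pos he]
        · rw [if_neg he, if_neg he]
          have : ¬ ((iv, k) ∈ [(1, 2), (3, 4), (4, 5)] ∨
              (k, iv) ∈ [(1, 2), (3, 4), (4, 5)]) := by
            simp only [List.mem_cons, List.not_mem_nil, Prod.mk.injEq, or_false]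
            omega
          rcases eq_or_ne iv 0 with h0 | h0
          · rw [if_pos h0, if_pos (Or.inl h0)]
          · rw [if_neg h0, if_neg (by
              push_neg
              exact ⟨h0, by omega, fun h => absurd h (by tauto),
                fun h => absurd h (by tauto)⟩)]
      · rw [if_neg h4, if_neg h4]
    rw [sum_split t _ _ hg]
    rcases Nat.lt_or_ge iv 6 with h6 | h6
    · interval_cases iv <;> fin_cases j <;>
        simp (config := { decide := true }) [hp, hQ, distMatrix, T4_dist, tail_small,
          Fin.ext_iff, Matrix.vecHead, Matrix.vecTail] <;>
        push_cast <;> ring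
    · rw [hpk iv h6 hi]
      fin_cases j <;>
        simp (config := { decide := true }) [hp, hQ, distMatrix, T4_dist, tail_small,
          tail_pend t iv h6 hi, Fin.ext_iff, Matrix.vecHead, Matrix.vecTail,
          show ¬ iv = 0 by omega, show ¬ iv = 1 by omega, show ¬ iv = 2 by omega,
          show ¬ iv = 3 by omega, show ¬ iv = 4 by omega, show ¬ iv = 5 by omega] <;>
        push_cast <;> ring
  · have hc : Matrix.charmatrix Q =
        !![X, -C 2, -C 2, -C 1, -C (t : ℝ);
           -C 1, X - C 1, -C 4, -C 2, -C (2 * (t : ℝ));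
           -C 1, -C 4, X - C 2, -C 1, -C (2 * (t : ℝ));
           -C 1, -C 4, -C 2, X, -C (2 * (t : ℝ));
           -C 1, -C 4, -C 4, -C 2, X - C (2 * (t : ℝ) - 2)] := by
      subst hQ
      refine Matrix.ext fun i j => ?_
      fin_cases i <;> fin_cases j <;>
        simp [Matrix.charmatrix_apply, Matrix.one_apply, Matrix.diagonal_apply,
          Fin.ext_iff, Matrix.cons_val_zero, Matrix.cons_val_one, Matrix.head_cons,
          Matrix.cons_val', Matrix.empty_val', Matrix.cons_val_fin_one, Matrix.head_val',
          Matrix.cons_val_succ] <;>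
        (try decide) <;>
        (try simp [Matrix.vecHead, Matrix.vecTail]) <;>
        (try decide) <;> (try omega)
    rw [Matrix.charpoly, hc]
    simp only [Matrix.det_succ_row_zero, Fin.sum_univ_succ, Fin.sum_univ_zero,
      Matrix.submatrix_apply, Matrix.cons_val', Matrix.cons_val_zero, Matrix.cons_val_one,
      Matrix.head_cons, Matrix.empty_val', Matrix.cons_val_fin_one, Matrix.head_val',
      Matrix.det_fin_one, Matrix.cons_val_succ, Fin.succ, Fin.succAbove, Fin.lt_def,
      Matrix.cons_val_zero]
    norm_num
    simp only [map_ofNat, Polynomial.C_eq_natCast, Polynomial.C_1, Polynomial.C_sub,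
      Polynomial.C_add, Polynomial.C_mul]
    push_cast
    ring
end
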